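/- Suppose real numbers μ, a_1, …, a_14 are such that the 8 × 8 symmetric matrix G(μ, a_1, …, a_14) has rank at most 3, 0.6 ≤ μ ≤ 0.64759, and |a_j| < μ for all 1 ≤ j ≤ 14. Then a_6 = (1 + μ − 4μ²)/(1 + μ), a_9 = −a_8, and a_8² = (1 + μ − 3μ² − μ³)/(2 + 4μ). -/

import Mathlib

/-- The `8 × 8` symmetric matrix `G(μ, a₁, …, a₁₄)` from the paper. -/
def packingGram (μ a1 a2 a3 a4 a5 a6 a7 a8 a9 a10 a11 a12 a13 a14 : ℝ) :
    Matrix (Fin 8) (Fin 8) ℝ :=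
  !![1,  a1,  μ,  a2,  a3, -μ,  a4, -μ;
     a1, 1,  -μ,  a5, -μ,  a6, -μ,  a7;
     μ, -μ,   1,   μ,  a8, -μ,  a9, a10;
     a2, a5,  μ,   1, a11, a12,  μ,   μ;
     a3, -μ, a8, a11,   1,   μ,  μ,  -μ;
     -μ, a6, -μ, a12,   μ,   1,  μ, a13;
     a4, -μ, a9,   μ,   μ,   μ,  1, a14;
     -μ, a7, a10,  μ,  -μ, a13, a14,  1]

/-- Any `4 × 4` minor of a rank-at-most-3 `8 × 8` real matrix vanishes. -/
lemma det_submatrix_eq_zero {A : Matrix (Fin 8) (Fin 8) ℝ} (h : A.rank ≤ 3)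
    (f g : Fin 4 → Fin 8) : (A.submatrix f g).det = 0 := by
  by_contra hd
  have key : A.submatrix f g =
      ((1 : Matrix (Fin 8) (Fin 8) ℝ).submatrix f (Equiv.refl _)) * A *
        ((1 : Matrix (Fin 8) (Fin 8) ℝ).submatrix (Equiv.refl _) g) := by
    rw [Matrix.one_submatrix_mul, Matrix.mul_submatrix_one]
    simp [Matrix.submatrix_submatrix]
  have hle : (A.submatrix f g).rank ≤ A.rank := by
    rw [key]
    exact le_trans (Matrix.rank_mul_le_left _ _) (Matrix.rank_mul_le_right _ _)
  have h4 : (A.submatrix f g).rank = 4 := by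
    have := Matrix.rank_of_isUnit (A.submatrix f g)
      ((Matrix.isUnit_iff_isUnit_det _).mpr (isUnit_iff_ne_zero.mpr hd))
    simpa using this
  omega

/-- **Steps 1 and 2 combined.** Under the rank-3 and coherence conditions on `G`, the coefficients `a₆`, `a₉` and `a₈²` are determined. -/
theorem steps1and2
    (μ a1 a2 a3 a4 a5 a6 a7 a8 a9 a10 a11 a12 a13 a14 : ℝ)
    (hrank : (packingGram μ a1 a2 a3 a4 a5 a6 a7 a8 a9 a10 a11 a12 a13 a14).rank ≤ 3)
    (hμ1 : (0.6 : ℝ) ≤ μ) (hμ2 : μ ≤ 0.64759)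
    (h1 : |a1| < μ) (h2 : |a2| < μ) (h3 : |a3| < μ) (h4 : |a4| < μ) (h5 : |a5| < μ)
    (h6 : |a6| < μ) (h7 : |a7| < μ) (h8 : |a8| < μ) (h9 : |a9| < μ) (h10 : |a10| < μ)
    (h11 : |a11| < μ) (h12 : |a12| < μ) (h13 : |a13| < μ) (h14 : |a14| < μ) :
    a6 = (1 + μ - 4 * μ ^ 2) / (1 + μ) ∧ a9 = -a8 ∧ a8 ^ 2 = (1 + μ - 3 * μ ^ 2 - μ ^ 3) / (2 + 4 * μ) := by
  have hμ0 : (0 : ℝ) < μ := by norm_num at hμ1 ⊢; linarith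
  have hμlt1 : μ < 1 := by norm_num at hμ2 ⊢; linarith
  have ha6 := abs_lt.mp h6
  -- minor on rows/columns {2,5,6,7} (1-indexed)
  have hE1 : 1 - a6^2 - 5*μ^2 - 4*μ^2*a6 + μ^2*a6^2 + 4*μ^3 + 4*μ^3*a6 = 0 := by
    have h := det_submatrix_eq_zero hrank ![1,4,5,6] ![1,4,5,6]
    have e : (packingGram μ a1 a2 a3 a4 a5 a6 a7 a8 a9 a10 a11 a12 a13 a14).submatrix
        ![1,4,5,6] ![1,4,5,6] = !![1,-μ,a6,-μ; -μ,1,μ,μ; a6,μ,1,μ; -μ,μ,μ,1] := by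
      ext i j; fin_cases i <;> fin_cases j <;> rfl
    rw [e] at h
    rw [show (!![1,-μ,a6,-μ; -μ,1,μ,μ; a6,μ,1,μ; -μ,μ,μ,1] : Matrix (Fin 4) (Fin 4) ℝ).det =
        1 - a6^2 - 5*μ^2 - 4*μ^2*a6 + μ^2*a6^2 + 4*μ^3 + 4*μ^3*a6 by
      simp [Matrix.det_succ_row_zero, Fin.sum_univ_succ, Fin.succAbove, Fin.castSucc,
        Fin.castAdd, Fin.castLE]; ring] at h
    exact h
  -- minor on rows/columns {2,3,5,6}
  have hE2 : 1 - a8^2 - a6^2 + a6^2*a8^2 - 4*μ^2 + 4*μ^4 = 0 := by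
    have h := det_submatrix_eq_zero hrank ![1,2,4,5] ![1,2,4,5]
    have e : (packingGram μ a1 a2 a3 a4 a5 a6 a7 a8 a9 a10 a11 a12 a13 a14).submatrix
        ![1,2,4,5] ![1,2,4,5] = !![1,-μ,-μ,a6; -μ,1,a8,-μ; -μ,a8,1,μ; a6,-μ,μ,1] := by
      ext i j; fin_cases i <;> fin_cases j <;> rfl
    rw [e] at h
    rw [show (!![1,-μ,-μ,a6; -μ,1,a8,-μ; -μ,a8,1,μ; a6,-μ,μ,1] : Matrix (Fin 4) (Fin 4) ℝ).det =
        1 - a8^2 - a6^2 + a6^2*a8^2 - 4*μ^2 + 4*μ^4 by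
      simp [Matrix.det_succ_row_zero, Fin.sum_univ_succ, Fin.succAbove, Fin.castSucc,
        Fin.castAdd, Fin.castLE]; ring] at h
    exact h
  -- minor on rows/columns {2,3,5,7}
  have hE4 : 1 - a9^2 - a8^2 + 2*μ*a8*a9 - 4*μ^2 + 2*μ^2*a9 + μ^2*a9^2 + 2*μ^2*a8
      - 2*μ^2*a8*a9 + μ^2*a8^2 + 2*μ^3 - 2*μ^3*a9 - 2*μ^3*a8 + μ^4 = 0 := by
    have h := det_submatrix_eq_zero hrank ![1,2,4,6] ![1,2,4,6]
    have e : (packingGram μ a1 a2 a3 a4 a5 a6 a7 a8 a9 a10 a11 a12 a13 a14).submatrix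
        ![1,2,4,6] ![1,2,4,6] = !![1,-μ,-μ,-μ; -μ,1,a8,a9; -μ,a8,1,μ; -μ,a9,μ,1] := by
      ext i j; fin_cases i <;> fin_cases j <;> rfl
    rw [e] at h
    rw [show (!![1,-μ,-μ,-μ; -μ,1,a8,a9; -μ,a8,1,μ; -μ,a9,μ,1] : Matrix (Fin 4) (Fin 4) ℝ).det =
        1 - a9^2 - a8^2 + 2*μ*a8*a9 - 4*μ^2 + 2*μ^2*a9 + μ^2*a9^2 + 2*μ^2*a8
          - 2*μ^2*a8*a9 + μ^2*a8^2 + 2*μ^3 - 2*μ^3*a9 - 2*μ^3*a8 + μ^4 by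
      simp [Matrix.det_succ_row_zero, Fin.sum_univ_succ, Fin.succAbove, Fin.castSucc,
        Fin.castAdd, Fin.castLE]; ring] at h
    exact h
  -- minor on rows/columns {3,5,6,7}
  have hE5 : 1 - a9^2 - a8^2 + 2*μ*a8*a9 - 4*μ^2 - 2*μ^2*a9 + μ^2*a9^2 - 2*μ^2*a8
      - 2*μ^2*a8*a9 + μ^2*a8^2 + 2*μ^3 + 2*μ^3*a9 + 2*μ^3*a8 + μ^4 = 0 := by
    have h := det_submatrix_eq_zero hrank ![2,4,5,6] ![2,4,5,6]
    have e : (packingGram μ a1 a2 a3 a4 a5 a6 a7 a8 a9 a10 a11 a12 a13 a14).submatrix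
        ![2,4,5,6] ![2,4,5,6] = !![1,a8,-μ,a9; a8,1,μ,μ; -μ,μ,1,μ; a9,μ,μ,1] := by
      ext i j; fin_cases i <;> fin_cases j <;> rfl
    rw [e] at h
    rw [show (!![1,a8,-μ,a9; a8,1,μ,μ; -μ,μ,1,μ; a9,μ,μ,1] : Matrix (Fin 4) (Fin 4) ℝ).det =
        1 - a9^2 - a8^2 + 2*μ*a8*a9 - 4*μ^2 - 2*μ^2*a9 + μ^2*a9^2 - 2*μ^2*a8
          - 2*μ^2*a8*a9 + μ^2*a8^2 + 2*μ^3 + 2*μ^3*a9 + 2*μ^3*a8 + μ^4 by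
      simp [Matrix.det_succ_row_zero, Fin.sum_univ_succ, Fin.succAbove, Fin.castSucc,
        Fin.castAdd, Fin.castLE]; ring] at h
    exact h
  -- Step 1: determine a6
  have hq0 : (1 + μ) * a6 - (1 + μ - 4 * μ ^ 2) = 0 := by
    have hfac : (μ - 1) * ((a6 + 1) * ((1 + μ) * a6 - (1 + μ - 4 * μ ^ 2))) = 0 := by
      linear_combination hE1
    rcases mul_eq_zero.mp hfac with h' | h'
    · linarith
    rcases mul_eq_zero.mp h' with h' | h'
    · linarith
    · exact h'
  have goala6 : a6 = (1 + μ - 4 * μ ^ 2) / (1 + μ) := by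
    rw [eq_div_iff (by linarith : (1 : ℝ) + μ ≠ 0)]
    linarith [hq0]
  refine ⟨goala6, ?_, ?_⟩
  · -- a9 = -a8
    have hfac : 4 * μ^2 * (1 - μ) * (a8 + a9) = 0 := by
      linear_combination hE4 - hE5
    have hpos : (0:ℝ) < 4 * μ^2 * (1 - μ) := mul_pos (mul_pos (by norm_num) (pow_pos hμ0 2)) (by linarith)
    have := (mul_eq_zero.mp hfac).resolve_left (ne_of_gt hpos)
    linarith
  · -- a8^2
    have hkey : 4 * μ^2 * (1 - μ) * ((2 + 4*μ) * a8^2 - (1 + μ - 3*μ^2 - μ^3)) = 0 := by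
      linear_combination (-(1+μ)^2) * hE2
        - (((1+μ)*a6 - (1+μ-4*μ^2)) + 2*(1+μ-4*μ^2)) * (1-a8^2) * hq0
    have hpos : (0:ℝ) < 4 * μ^2 * (1 - μ) := mul_pos (mul_pos (by norm_num) (pow_pos hμ0 2)) (by linarith)
    have h0 := (mul_eq_zero.mp hkey).resolve_left (ne_of_gt hpos)
    rw [eq_div_iff (by linarith : (2 : ℝ) + 4*μ ≠ 0)]
    linarith
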